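/- Let A be a theory and X an object of A, with F(X) = Hom_A(X,−) the corresponding finitely generated free model. Then for every abelian group object p : B → F(X) in A-mod/F(X), the group of sections Der(F(X); B) is naturally isomorphic to the fiber p⁻¹(id_X) ⊆ B(X) over id_X ∈ F(X)(X). Consequently Der(F(X);−) is an exact functor and Ω¹_{F(X)} is a projective object of Ab(A-mod/F(X)). -/

import Mathlib

open CategoryTheory CategoryTheory.Limits Opposite

/-- The category `A-mod` of models of a theory `A`. -/
abbrev AMod (A : Type) [SmallCategory A] [HasFiniteProducts A] : Type 1 :=
  ObjectProperty.FullSubcategory (fun F : A ⥤ Type => Nonempty (PreservesFiniteProducts F))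

/-- The finitely generated free model `F(X) = Hom_A(X, -)`. -/
noncomputable abbrev freeModel {A : Type} [SmallCategory A] [HasFiniteProducts A]
    (X : A) : AMod A :=
  ⟨coyoneda.obj (op X), ⟨⟨fun _ => inferInstance⟩⟩⟩

universe v u

/-- An abelian group object in a category `𝒟`, via its functor of points. -/
structure AbGroupObject (𝒟 : Type u) [Category.{v} 𝒟] where
  pt : 𝒟
  add : ∀ {T : 𝒟}, (T ⟶ pt) → (T ⟶ pt) → (T ⟶ pt)
  zero : ∀ T : 𝒟, (T ⟶ pt)
  neg : ∀ {T : 𝒟}, (T ⟶ pt) → (T ⟶ pt)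
  add_assoc : ∀ {T : 𝒟} (f g h : T ⟶ pt), add (add f g) h = add f (add g h)
  add_comm : ∀ {T : 𝒟} (f g : T ⟶ pt), add f g = add g f
  zero_add : ∀ {T : 𝒟} (f : T ⟶ pt), add (zero T) f = f
  neg_add_cancel : ∀ {T : 𝒟} (f : T ⟶ pt), add (neg f) f = zero T
  add_natural : ∀ {T T' : 𝒟} (h : T ⟶ T') (f g : T' ⟶ pt),
    h ≫ add f g = add (h ≫ f) (h ≫ g)
  zero_natural : ∀ {T T' : 𝒟} (h : T ⟶ T'), h ≫ zero T' = zero T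

/-- Morphisms of abelian group objects. -/
def AbHom {𝒟 : Type u} [Category.{v} 𝒟] (B B' : AbGroupObject 𝒟) : Type _ :=
  { φ : B.pt ⟶ B'.pt //
    ∀ {T : 𝒟} (f g : T ⟶ B.pt), B.add f g ≫ φ = B'.add (f ≫ φ) (g ≫ φ) }

/-- Composition of morphisms of abelian group objects. -/
def AbHom.comp {𝒟 : Type u} [Category.{v} 𝒟] {B₁ B₂ B₃ : AbGroupObject 𝒟}
    (φ : AbHom B₁ B₂) (ψ : AbHom B₂ B₃) : AbHom B₁ B₃ :=
  ⟨φ.1 ≫ ψ.1, fun f g => by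
    rw [← Category.assoc, φ.2, ψ.2, Category.assoc, Category.assoc]⟩

/-- **Sections over a free model.**  Let `A` be a theory, `X ∈ A` and
`F(X) = Hom_A(X,-)` the corresponding free model.  Then:
* for every abelian group object `p : B → F(X)` in `A-mod/F(X)`, the group of
  sections `Der(F(X);B)` is naturally isomorphic to the fiber `p⁻¹(id_X) ⊆ B(X)`
  over `id_X ∈ F(X)(X)`;
* consequently `Der(F(X);-)` is exact (it preserves componentwise surjections), and
* any representing object `Ω¹` of `Der(F(X);-)` is projective. -/
theorem stmt18 {A : Type} [SmallCategory A] [HasFiniteProducts A] (X : A) :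
    ∃ e : ∀ B : AbGroupObject (Over (freeModel X)),
        (Over.mk (𝟙 (freeModel X)) ⟶ B.pt) ≃
          { b : B.pt.left.obj.obj X // B.pt.hom.hom.app X b = 𝟙 X },
      -- naturality of the identification of `Der(F(X);B)` with the fiber over `id_X`
      (∀ (B B' : AbGroupObject (Over (freeModel X))) (ψ : B.pt ⟶ B'.pt)
          (s : Over.mk (𝟙 (freeModel X)) ⟶ B.pt),
        ((e B') (s ≫ ψ)).1 = ψ.left.hom.app X ((e B) s).1) ∧
      -- `Der(F(X);-)` preserves surjections (exactness)
      (∀ (B B' : AbGroupObject (Over (freeModel X))) (ψ : AbHom B B'),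
        (∀ Y : A, Function.Surjective (ψ.1.left.hom.app Y)) →
          ∀ s' : Over.mk (𝟙 (freeModel X)) ⟶ B'.pt,
            ∃ s : Over.mk (𝟙 (freeModel X)) ⟶ B.pt, s ≫ ψ.1 = s') ∧
      -- any object representing `Der(F(X);-)` is projective
      (∀ (Ω : AbGroupObject (Over (freeModel X)))
          (r : ∀ B : AbGroupObject (Over (freeModel X)),
            AbHom Ω B ≃ (Over.mk (𝟙 (freeModel X)) ⟶ B.pt)),
        (∀ (B B' : AbGroupObject (Over (freeModel X))) (ψ : AbHom B B')
            (φ : AbHom Ω B), r B' (φ.comp ψ) = r B φ ≫ ψ.1) →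
        ∀ (B B' : AbGroupObject (Over (freeModel X))) (ψ : AbHom B B'),
          (∀ Y : A, Function.Surjective (ψ.1.left.hom.app Y)) →
            Function.Surjective (fun φ : AbHom Ω B => φ.comp ψ)) := by
  classical
  obtain ⟨e, hnat⟩ : ∃ e : ∀ B : AbGroupObject (Over (freeModel X)),
        (Over.mk (𝟙 (freeModel X)) ⟶ B.pt) ≃
          { b : B.pt.left.obj.obj X // B.pt.hom.hom.app X b = 𝟙 X },
      ∀ (B B' : AbGroupObject (Over (freeModel X))) (ψ : B.pt ⟶ B'.pt)
          (s : Over.mk (𝟙 (freeModel X)) ⟶ B.pt),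
        ((e B') (s ≫ ψ)).1 = ψ.left.hom.app X ((e B) s).1 := by
    refine ⟨fun B =>
    { toFun := fun s => ⟨s.left.hom.app X (𝟙 X), ?_⟩
      invFun := fun b => Over.homMk
        (show (Over.mk (𝟙 (freeModel X))).left ⟶ B.pt.left from
          ObjectProperty.homMk
          { app := fun Y => TypeCat.ofHom fun f => B.pt.left.obj.map f b.1
            naturality := fun Y Y' f => by
              ext g
              simp [FunctorToTypes.map_comp_apply] })
        ?_
      left_inv := fun s => ?_
      right_inv := fun b => ?_ }, ?_⟩
    · have h := Over.w s
      exact ConcreteCategory.congr_hom (congr_app (congrArg (fun k => k.hom) h) X) (𝟙 X)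
    · apply ObjectProperty.hom_ext
      apply CategoryTheory.NatTrans.ext
      funext Y
      ext f
      have h := b.2
      have hn := ConcreteCategory.congr_hom (B.pt.hom.hom.naturality f) b.1
      dsimp at hn
      show B.pt.hom.hom.app Y (B.pt.left.obj.map f b.1) = f
      rw [hn, h]
      simp
    · apply Over.OverMorphism.ext
      apply ObjectProperty.hom_ext
      apply CategoryTheory.NatTrans.ext
      funext Y
      ext f
      have hn := ConcreteCategory.congr_hom (s.left.hom.naturality f) (𝟙 X)
      dsimp at hn
      show B.pt.left.obj.map f (s.left.hom.app X (𝟙 X)) = s.left.hom.app Y f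
      rw [← hn]
      simp
    · apply Subtype.ext
      simp
    · intro B B' ψ s
      rfl
  have hsur : ∀ (B B' : AbGroupObject (Over (freeModel X))) (ψ : AbHom B B'),
      (∀ Y : A, Function.Surjective (ψ.1.left.hom.app Y)) →
        ∀ s' : Over.mk (𝟙 (freeModel X)) ⟶ B'.pt,
          ∃ s : Over.mk (𝟙 (freeModel X)) ⟶ B.pt, s ≫ ψ.1 = s' := by
    intro B B' ψ hs s'
    obtain ⟨b, hb⟩ := hs X ((e B') s').1
    have hfib : B.pt.hom.hom.app X b = 𝟙 X := by
      have hw : B'.pt.hom.hom.app X (ψ.1.left.hom.app X b) = B.pt.hom.hom.app X b :=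
        ConcreteCategory.congr_hom (congr_app (congrArg (fun k => k.hom) (Over.w ψ.1)) X) b
      rw [← hw, hb]
      exact ((e B') s').2
    refine ⟨(e B).symm ⟨b, hfib⟩, (e B').injective (Subtype.ext ?_)⟩
    rw [hnat]
    rw [(e B).apply_symm_apply]
    exact hb
  refine ⟨e, hnat, hsur, ?_⟩
  intro Ω r hr B B' ψ hs φ'
  obtain ⟨s, hsψ⟩ := hsur B B' ψ hs (r B' φ')
  refine ⟨(r B).symm s, (r B').injective ?_⟩
  rw [hr]
  rw [(r B).apply_symm_apply]
  exact hsψ
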